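/- Let G be a split graph with split partitions (C, I) and (C', I') that are distinct. Then the sizes of C and C' differ by at most 1. -/

import Mathlib

/-- `s` is an independent set of `G`. -/
def SimpleGraph.IsIndepSetOfFile {V : Type} (G : SimpleGraph V) (s : Set V) : Prop :=
  s.Pairwise fun u v => ¬ G.Adj u v

/-- `(C, I)` is a split partition of `G`: `C` is a clique, `I` is an independent
set, and they partition the vertex set. -/
def SimpleGraph.IsSplitPartition {V : Type} (G : SimpleGraph V) (C I : Set V) : Prop :=
  C ∪ I = Set.univ ∧ Disjoint C I ∧ G.IsClique C ∧ G.IsIndepSetOfFile I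

lemma split_aux {V : Type} [Fintype V] (G : SimpleGraph V) (C I C' I' : Set V)
    (h : G.IsSplitPartition C I) (h' : G.IsSplitPartition C' I') :
    C.ncard ≤ C'.ncard + 1 := by
  obtain ⟨hu, hd, hc, hi⟩ := h
  obtain ⟨hu', hd', hc', hi'⟩ := h'
  have hsub : C \ C' ⊆ I' := by
    intro v hv
    have : v ∈ C' ∪ I' := hu' ▸ Set.mem_univ v
    rcases this with hvC | hvI
    · exact absurd hvC hv.2
    · exact hvI
  have hss : (C \ C').Subsingleton := by
    intro u hu' v hv'
    by_contra hne'
    exact hi' (hsub hu') (hsub hv') hne' (hc hu'.1 hv'.1 hne')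
  have h1 : (C \ C').ncard ≤ 1 := by
    rcases hss.eq_empty_or_singleton with he | he
    · simp [he]
    · obtain ⟨a, ha⟩ := he; simp [ha]
  calc C.ncard ≤ (C' ∪ (C \ C')).ncard := Set.ncard_le_ncard
        (by intro v hv; by_cases hv' : v ∈ C' <;> simp [hv, hv']) (Set.toFinite _)
    _ ≤ C'.ncard + (C \ C').ncard := Set.ncard_union_le _ _
    _ ≤ C'.ncard + 1 := by omega

theorem stmt2 {V : Type} [Fintype V] (G : SimpleGraph V) (C I C' I' : Set V)
    (h : G.IsSplitPartition C I) (h' : G.IsSplitPartition C' I')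
    (hne : (C, I) ≠ (C', I')) :
    C.ncard ≤ C'.ncard + 1 ∧ C'.ncard ≤ C.ncard + 1 := by
  exact ⟨split_aux G C I C' I' h h', split_aux G C' I' C I h' h⟩
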